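/- For the self-loop normalized adjacency M = D̃^{-1/2} Ã D̃^{-1/2} of a connected graph, the powers M^k converge as k → ∞ to the rank-one matrix v vᵀ / ‖v‖², where v_i = √(D̃_ii). -/

import Mathlib

open Matrix BigOperators

lemma pow_tendsto_zero_aux {n : ℕ} (R U : Matrix (Fin n) (Fin n) ℝ) (d : Fin n → ℝ)
    (hUs : U * star U = 1) (hsU : star U * U = 1)
    (hspec : R = U * Matrix.diagonal d * star U) (hd : ∀ i, |d i| < 1) :
    Filter.Tendsto (fun k : ℕ => R ^ k) Filter.atTop (nhds 0) := by
  have hpow : ∀ k : ℕ, R ^ k = U * Matrix.diagonal (fun i => d i ^ k) * star U := by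
    intro k
    induction k with
    | zero => simpa using hUs.symm
    | succ k ih =>
      rw [pow_succ, ih, hspec]
      simp only [Matrix.mul_assoc]
      rw [← Matrix.mul_assoc (star U) U, hsU, Matrix.one_mul,
        ← Matrix.mul_assoc (Matrix.diagonal _) (Matrix.diagonal _), Matrix.diagonal_mul_diagonal]
      congr 2
  have hdiag : Filter.Tendsto (fun k : ℕ => Matrix.diagonal (fun i => d i ^ k))
      Filter.atTop (nhds (0 : Matrix (Fin n) (Fin n) ℝ)) := by
    refine tendsto_pi_nhds.2 ?_
    intro i
    rw [tendsto_pi_nhds]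
    intro j
    by_cases h : i = j
    · subst h
      simpa [Matrix.diagonal_apply_eq] using
        tendsto_pow_atTop_nhds_zero_of_abs_lt_one (hd i)
    · simp only [Matrix.diagonal_apply_ne _ h, Matrix.zero_apply]
      exact tendsto_const_nhds
  have h2 := (tendsto_const_nhds (x := U) (f := Filter.atTop (α := ℕ))).mul hdiag |>.mul
    (tendsto_const_nhds (x := star U))
  simp only [Matrix.mul_zero, Matrix.zero_mul] at h2
  refine h2.congr fun k => ?_
  rw [hpow k]

/-- A real symmetric matrix whose eigenvalues all have absolute value < 1 has powers tending to 0. -/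
lemma pow_tendsto_zero_of_isHermitian {n : ℕ} {R : Matrix (Fin n) (Fin n) ℝ}
    (hR : R.IsHermitian) (hev : ∀ i, |hR.eigenvalues i| < 1) :
    Filter.Tendsto (fun k : ℕ => R ^ k) Filter.atTop (nhds 0) := by
  refine pow_tendsto_zero_aux R (hR.eigenvectorUnitary : Matrix (Fin n) (Fin n) ℝ)
    hR.eigenvalues ?_ (Matrix.UnitaryGroup.star_mul_self hR.eigenvectorUnitary) ?_ hev
  · exact (Matrix.mem_unitaryGroup_iff).mp hR.eigenvectorUnitary.2
  · have := hR.spectral_theorem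
    rwa [RCLike.ofReal_real_eq_id, Function.id_comp] at this

theorem stmt15 (n : ℕ) (G : SimpleGraph (Fin n)) [DecidableRel G.Adj]
    (hconn : G.Connected) (hedge : ∃ i j, G.Adj i j)
    (A : Matrix (Fin n) (Fin n) ℝ) (hA : A = G.adjMatrix ℝ)
    (deg : Fin n → ℝ) (hdeg : ∀ i, deg i = ∑ j, A i j)
    (M : Matrix (Fin n) (Fin n) ℝ)
    (hM : M = Matrix.diagonal (fun i => 1 / Real.sqrt (deg i + 1)) * (A + 1) *
      Matrix.diagonal (fun i => 1 / Real.sqrt (deg i + 1)))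
    (v : Fin n → ℝ) (hv : v = fun i => Real.sqrt (deg i + 1)) :
    Filter.Tendsto (fun k : ℕ => M ^ k) Filter.atTop
      (nhds ((∑ i, v i ^ 2)⁻¹ • Matrix.vecMulVec v v)) := by
  classical
  obtain ⟨i₀, j₀, hij₀⟩ := hedge
  set s : Fin n → ℝ := fun i => 1 / Real.sqrt (deg i + 1) with hs
  have hAapp : ∀ i j, A i j = if G.Adj i j then 1 else 0 := by
    intro i j; rw [hA]; simp
  have hAsymm : ∀ i j, A i j = A j i := by intro i j; simp [hAapp, G.adj_comm]
  have hAnn : ∀ i j, 0 ≤ A i j := by intro i j; rw [hAapp]; split <;> norm_num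
  have hdpos : ∀ i, (0:ℝ) < deg i + 1 := by
    intro i
    have h0 : 0 ≤ deg i := by rw [hdeg]; exact Finset.sum_nonneg fun j _ => hAnn i j
    linarith
  have hvpos : ∀ i, 0 < v i := by intro i; rw [hv]; exact Real.sqrt_pos.2 (hdpos i)
  have hvv : ∀ i, v i * v i = deg i + 1 := by
    intro i; rw [hv]; exact Real.mul_self_sqrt (hdpos i).le
  have hsv : ∀ i, s i * v i = 1 := by
    intro i; rw [hs, hv]
    simp only
    rw [one_div, inv_mul_cancel₀ (Real.sqrt_pos.2 (hdpos i)).ne']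
  have hvs : ∀ i, v i * s i = 1 := fun i => by rw [mul_comm]; exact hsv i
  have hvzero : ∀ i, v i ≠ 0 := fun i => (hvpos i).ne'
  have hsum : (0:ℝ) < ∑ i, v i ^ 2 :=
    Finset.sum_pos (fun i _ => pow_pos (hvpos i) 2) ⟨i₀, Finset.mem_univ i₀⟩
  set c : ℝ := (∑ i, v i ^ 2)⁻¹ with hc
  have hcz : c ≠ 0 := inv_ne_zero hsum.ne'
  have hcs : c * ∑ i, v i ^ 2 = 1 := inv_mul_cancel₀ hsum.ne'
  have hMe : ∀ i j, M i j = s i * (A i j + (if i = j then 1 else 0)) * s j := by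
    intro i j
    rw [hM, Matrix.mul_diagonal, Matrix.diagonal_mul, Matrix.add_apply, Matrix.one_apply]
  have hMsymm : ∀ i j, M i j = M j i := by
    intro i j
    rw [hMe, hMe, hAsymm i j]
    have h1 : (if i = j then (1:ℝ) else 0) = if j = i then 1 else 0 := by simp [eq_comm]
    rw [h1]; ring
  have hrow : ∀ i, ∑ j, (A i j + if i = j then (1:ℝ) else 0) = deg i + 1 := by
    intro i
    rw [Finset.sum_add_distrib, ← hdeg]
    congr 1
    simp
  have hMv : ∀ i, ∑ j, M i j * v j = v i := by
    intro i
    have h1 : ∀ j, M i j * v j = s i * (A i j + if i = j then 1 else 0) := by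
      intro j; rw [hMe, mul_assoc, hsv j, mul_one]
    rw [Finset.sum_congr rfl fun j _ => h1 j, ← Finset.mul_sum, hrow]
    rw [hs, hv]
    simp only
    rw [one_div, inv_mul_eq_div]
    exact Real.div_sqrt
  set P : Matrix (Fin n) (Fin n) ℝ := c • Matrix.vecMulVec v v with hPdef
  have hPe : ∀ i j, P i j = c * (v i * v j) := by
    intro i j; simp [hPdef, Matrix.vecMulVec_apply]
  have hMP : M * P = P := by
    ext i j
    rw [Matrix.mul_apply, hPe]
    calc ∑ k, M i k * P k j = ∑ k, (M i k * v k) * (c * v j) := by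
          refine Finset.sum_congr rfl fun k _ => ?_; rw [hPe]; ring
      _ = (∑ k, M i k * v k) * (c * v j) := (Finset.sum_mul _ _ _).symm
      _ = c * (v i * v j) := by rw [hMv i]; ring
  have hPM : P * M = P := by
    ext i j
    rw [Matrix.mul_apply, hPe]
    calc ∑ k, P i k * M k j = ∑ k, (M j k * v k) * (c * v i) := by
          refine Finset.sum_congr rfl fun k _ => ?_; rw [hPe, hMsymm k j]; ring
      _ = (∑ k, M j k * v k) * (c * v i) := (Finset.sum_mul _ _ _).symm
      _ = c * (v i * v j) := by rw [hMv j]; ring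
  have hPP : P * P = P := by
    ext i j
    rw [Matrix.mul_apply, hPe]
    calc ∑ k, P i k * P k j = ∑ k, (v k ^ 2) * (c * c * (v i * v j)) := by
          refine Finset.sum_congr rfl fun k _ => ?_; rw [hPe, hPe]; ring
      _ = (∑ k, v k ^ 2) * (c * c * (v i * v j)) := (Finset.sum_mul _ _ _).symm
      _ = c * (v i * v j) := by
          rw [show (∑ k, v k ^ 2) * (c * c * (v i * v j))
              = (c * ∑ k, v k ^ 2) * (c * (v i * v j)) from by ring, hcs, one_mul]
  set R : Matrix (Fin n) (Fin n) ℝ := M - P with hRdef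
  have hMRP : M = P + R := by rw [hRdef, add_sub_cancel]
  have hPR : P * R = 0 := by rw [hRdef, Matrix.mul_sub, hPM, hPP, sub_self]
  have hRP : R * P = 0 := by rw [hRdef, Matrix.sub_mul, hMP, hPP, sub_self]
  have hMpow : ∀ m : ℕ, M ^ (m + 1) = P + R ^ (m + 1) := by
    intro m
    induction m with
    | zero => rw [pow_one, pow_one]; exact hMRP
    | succ m ih =>
      have h1 : R ^ (m + 1) * P = 0 := by
        rw [pow_succ, Matrix.mul_assoc, hRP, Matrix.mul_zero]
      rw [pow_succ, ih, hMRP, Matrix.add_mul, Matrix.mul_add, Matrix.mul_add, hPP, hPR, h1,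
        ← pow_succ, add_zero, zero_add]
  have hRherm : R.IsHermitian := by
    show Rᴴ = R
    ext i j
    simp only [Matrix.conjTranspose_apply, star_trivial]
    rw [hRdef]
    simp only [Matrix.sub_apply]
    rw [hMsymm j i, hPe, hPe]
    ring
  -- the key eigenvalue bound
  have key : ∀ (μ : ℝ) (x : Fin n → ℝ), x ≠ 0 → R *ᵥ x = μ • x → |μ| < 1 := by
    intro μ x hx hRx
    rcases eq_or_ne μ 0 with h0 | h0
    · rw [h0]; norm_num
    have hPx : P *ᵥ x = 0 := by
      have h1 : P *ᵥ (R *ᵥ x) = 0 := by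
        rw [Matrix.mulVec_mulVec, hPR, Matrix.zero_mulVec]
      rw [hRx, Matrix.mulVec_smul] at h1
      rcases smul_eq_zero.mp h1 with h | h
      · exact absurd h h0
      · exact h
    have hPxapp : ∀ (y : Fin n → ℝ) (i : Fin n), (P *ᵥ y) i = c * v i * (v ⬝ᵥ y) := by
      intro y i
      show (∑ j, P i j * y j) = _
      calc ∑ j, P i j * y j = ∑ j, (c * v i) * (v j * y j) :=
            Finset.sum_congr rfl fun j _ => by rw [hPe]; ring
        _ = (c * v i) * ∑ j, v j * y j := (Finset.mul_sum _ _ _).symm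
        _ = c * v i * (v ⬝ᵥ y) := rfl
    have hvx : v ⬝ᵥ x = 0 := by
      have h1 := congrFun hPx i₀
      rw [hPxapp x i₀] at h1
      simp only [Pi.zero_apply] at h1
      rcases mul_eq_zero.mp h1 with h | h
      · exact absurd h (mul_ne_zero hcz (hvzero i₀))
      · exact h
    have hMx : M *ᵥ x = μ • x := by
      rw [hMRP, Matrix.add_mulVec, hPx, hRx, zero_add]
    set z : Fin n → ℝ := fun i => s i * x i with hzdef
    have hxz : ∀ i, x i = v i * z i := by
      intro i
      show x i = v i * (s i * x i)
      rw [← mul_assoc, hvs i, one_mul]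
    have hzne : z ≠ 0 := by
      intro h
      apply hx
      funext i
      rw [hxz i, congrFun h i]
      simp
    have hdx : x ⬝ᵥ x = ∑ i, (deg i + 1) * z i ^ 2 := by
      refine Finset.sum_congr rfl fun i _ => ?_
      rw [hxz i, ← hvv i]; ring
    have hdxpos : 0 < x ⬝ᵥ x := by
      obtain ⟨i, hi⟩ := Function.ne_iff.mp hx
      exact Finset.sum_pos' (fun j _ => mul_self_nonneg _)
        ⟨i, Finset.mem_univ i, mul_self_pos.2 hi⟩
    have hzz : 0 < ∑ i, z i ^ 2 := by
      obtain ⟨i, hi⟩ := Function.ne_iff.mp hzne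
      exact Finset.sum_pos' (fun j _ => sq_nonneg _)
        ⟨i, Finset.mem_univ i, pow_two_pos_of_ne_zero hi⟩
    have hMxd : x ⬝ᵥ (M *ᵥ x) = (∑ i, ∑ j, A i j * (z i * z j)) + ∑ i, z i ^ 2 := by
      have hterm : ∀ i j, x i * (M i j * x j)
          = A i j * (z i * z j) + (if i = j then z i * z j else 0) := by
        intro i j
        rw [hMe]
        simp only [hzdef]
        by_cases h : i = j
        · subst h
          rw [if_pos rfl, if_pos rfl]
          ring
        · rw [if_neg h, if_neg h, add_zero, add_zero]
          ring
      calc x ⬝ᵥ (M *ᵥ x) = ∑ i, ∑ j, x i * (M i j * x j) := by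
            simp only [dotProduct, Matrix.mulVec, Finset.mul_sum]
        _ = ∑ i, ∑ j, (A i j * (z i * z j) + (if i = j then z i * z j else 0)) :=
            Finset.sum_congr rfl fun i _ => Finset.sum_congr rfl fun j _ => hterm i j
        _ = (∑ i, ∑ j, A i j * (z i * z j)) + ∑ i, z i ^ 2 := by
            rw [← Finset.sum_add_distrib]
            refine Finset.sum_congr rfl fun i _ => ?_
            rw [Finset.sum_add_distrib]
            congr 1
            rw [Finset.sum_ite_eq Finset.univ i (fun j => z i * z j)]
            simp [sq]
    have hmu : x ⬝ᵥ (M *ᵥ x) = μ * (x ⬝ᵥ x) := by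
      rw [hMx, dotProduct_smul, smul_eq_mul]
    have hdegR : ∀ i, (G.degree i : ℝ) = deg i := by
      intro i
      rw [hdeg, G.degree_eq_sum_if_adj i]
      exact Finset.sum_congr rfl fun j _ => (hAapp i j).symm
    have hnbr : ∀ i, ∑ u ∈ G.neighborFinset i, z u = ∑ j, A i j * z j := by
      intro i
      rw [SimpleGraph.neighborFinset_eq_filter, Finset.sum_filter]
      refine Finset.sum_congr rfl fun j _ => ?_
      rw [hAapp]
      split <;> simp
    have hLz : z ⬝ᵥ (G.lapMatrix ℝ *ᵥ z)
        = (∑ i, deg i * z i ^ 2) - ∑ i, ∑ j, A i j * (z i * z j) := by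
      rw [show z ⬝ᵥ (G.lapMatrix ℝ *ᵥ z) = ∑ i, z i * (G.lapMatrix ℝ *ᵥ z) i from rfl,
        ← Finset.sum_sub_distrib]
      refine Finset.sum_congr rfl fun i _ => ?_
      rw [SimpleGraph.lapMatrix_mulVec_apply, hnbr i, hdegR i, mul_sub, Finset.mul_sum]
      congr 1
      · ring
      · exact Finset.sum_congr rfl fun j _ => by ring
    have hLnn : 0 ≤ z ⬝ᵥ (G.lapMatrix ℝ *ᵥ z) := by
      have h1 := (SimpleGraph.posSemidef_lapMatrix ℝ G).dotProduct_mulVec_nonneg z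
      simpa using h1
    have hsplit : ∑ i, (deg i + 1) * z i ^ 2 = (∑ i, deg i * z i ^ 2) + ∑ i, z i ^ 2 := by
      rw [← Finset.sum_add_distrib]
      exact Finset.sum_congr rfl fun i _ => by ring
    have hrel1 : z ⬝ᵥ (G.lapMatrix ℝ *ᵥ z) = (1 - μ) * (x ⬝ᵥ x) := by
      rw [hLz]
      have e1 := hdx.trans hsplit
      nlinarith [hmu, hMxd, e1]
    have hle : μ ≤ 1 := by nlinarith [hLnn, hrel1, hdxpos]
    have hne : μ ≠ 1 := by
      intro h1
      rw [h1] at hrel1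
      simp only [sub_self, zero_mul] at hrel1
      have h2 : Matrix.toLinearMap₂' ℝ (G.lapMatrix ℝ) z z = 0 := by
        rw [Matrix.toLinearMap₂'_apply']
        exact hrel1
      have h3 := (G.lapMatrix_toLinearMap₂'_apply'_eq_zero_iff_forall_reachable z).mp h2
      have hzc : ∀ i, z i = z i₀ := fun i => h3 i i₀ (hconn.preconnected i i₀)
      have h4 : v ⬝ᵥ x = (∑ i, v i ^ 2) * z i₀ := by
        rw [show v ⬝ᵥ x = ∑ i, v i * x i from rfl, Finset.sum_mul]
        refine Finset.sum_congr rfl fun i _ => ?_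
        rw [hxz i, hzc i]; ring
      rw [h4] at hvx
      rcases mul_eq_zero.mp hvx with h | h
      · exact absurd h hsum.ne'
      · exact hzne (funext fun i => by rw [hzc i, h]; simp)
    have hdz : ∑ i, deg i * z i ^ 2 = ∑ i, ∑ j, A i j * z i ^ 2 := by
      refine Finset.sum_congr rfl fun i _ => ?_
      rw [hdeg, Finset.sum_mul]
    have hdz2 : ∑ i, deg i * z i ^ 2 = ∑ i, ∑ j, A i j * z j ^ 2 := by
      rw [hdz, Finset.sum_comm]
      exact Finset.sum_congr rfl fun i _ => Finset.sum_congr rfl fun j _ => by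
        rw [hAsymm]
    have hstep : ∀ (F G' : Fin n → Fin n → ℝ),
        (∑ i, ∑ j, F i j) + (∑ i, ∑ j, G' i j) = ∑ i, ∑ j, (F i j + G' i j) := by
      intro F G'
      rw [← Finset.sum_add_distrib]
      exact Finset.sum_congr rfl fun i _ => Finset.sum_add_distrib.symm
    have hQ : 0 ≤ (∑ i, deg i * z i ^ 2) + ∑ i, ∑ j, A i j * (z i * z j) := by
      have h2Q : ((∑ i, deg i * z i ^ 2) + ∑ i, ∑ j, A i j * (z i * z j))
          + ((∑ i, deg i * z i ^ 2) + ∑ i, ∑ j, A i j * (z i * z j))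
          = ∑ i, ∑ j, A i j * (z i + z j) ^ 2 := by
        calc ((∑ i, deg i * z i ^ 2) + ∑ i, ∑ j, A i j * (z i * z j))
            + ((∑ i, deg i * z i ^ 2) + ∑ i, ∑ j, A i j * (z i * z j))
            = ((∑ i, ∑ j, A i j * z i ^ 2) + (∑ i, ∑ j, A i j * z j ^ 2))
              + ((∑ i, ∑ j, A i j * (z i * z j)) + (∑ i, ∑ j, A i j * (z i * z j))) := by
              nth_rewrite 1 [hdz]
              nth_rewrite 1 [hdz2]
              ring
          _ = ∑ i, ∑ j, (A i j * z i ^ 2 + A i j * z j ^ 2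
              + (A i j * (z i * z j) + A i j * (z i * z j))) := by
              rw [hstep, hstep, hstep]
          _ = ∑ i, ∑ j, A i j * (z i + z j) ^ 2 :=
              Finset.sum_congr rfl fun i _ => Finset.sum_congr rfl fun j _ => by ring
      have hnn : 0 ≤ ∑ i, ∑ j, A i j * (z i + z j) ^ 2 :=
        Finset.sum_nonneg fun i _ => Finset.sum_nonneg fun j _ =>
          mul_nonneg (hAnn i j) (sq_nonneg _)
      linarith
    have hgt : -1 < μ := by
      have e1 := hdx.trans hsplit
      nlinarith [hmu, hMxd, e1, hQ, hzz, hdxpos]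
    exact abs_lt.2 ⟨hgt, lt_of_le_of_ne hle hne⟩
  have hev : ∀ i, |hRherm.eigenvalues i| < 1 := by
    intro i
    refine key _ (⇑(hRherm.eigenvectorBasis i)) ?_ (hRherm.mulVec_eigenvectorBasis i)
    intro h0
    have h1 := hRherm.eigenvectorBasis.orthonormal.1 i
    rw [show hRherm.eigenvectorBasis i = 0 from ?_] at h1
    · simp at h1
    · apply PiLp.ext
      intro j
      exact congrFun h0 j
  have hR0 := pow_tendsto_zero_of_isHermitian hRherm hev
  have hfin : Filter.Tendsto (fun k : ℕ => P + R ^ k) Filter.atTop (nhds P) := by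
    have h1 := (tendsto_const_nhds (x := P) (f := Filter.atTop (α := ℕ))).add hR0
    simpa using h1
  refine Filter.Tendsto.congr' ?_ hfin
  filter_upwards [Filter.eventually_ge_atTop 1] with k hk
  match k, hk with
  | (m + 1), _ => exact (hMpow m).symm
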